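/- On the region t > 0 of ℝ⁴ with the Kasner-type metric ds² = −dt² + t^{2p} dx² + t^{2q} dy² + t² dz² (p ≠ 1), the vector field X = (1/(1−p)) t ∂_t + x ∂_x + ((q−1)/(p−1)) y ∂_y satisfies 𝓛_X g = (2/(1−p)) g, i.e., X is a homothetic vector field with conformal factor 1/(1−p). -/

import Mathlib

open scoped BigOperators
open Real

noncomputable section

variable {ι : Type*} [Fintype ι] [DecidableEq ι]

/-- Partial derivative of a function on coordinate space along the `i`-th coordinate. -/
def pd (f : (ι → ℝ) → ℝ) (i : ι) (x : ι → ℝ) : ℝ :=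
  fderiv ℝ f x (Pi.single i 1)

/-- Christoffel symbols `Γ^k_{ij}` of a metric `g` with inverse `ginv`, in coordinates. -/
def Christoffel (g ginv : (ι → ℝ) → Matrix ι ι ℝ) (k i j : ι) (x : ι → ℝ) : ℝ :=
  (1 / 2) * ∑ l, ginv x k l *
    (pd (fun y => g y l i) j x + pd (fun y => g y l j) i x - pd (fun y => g y i j) l x)

/-- Riemann curvature tensor `R^a_{bcd}` in coordinates. -/
def RiemannUp (g ginv : (ι → ℝ) → Matrix ι ι ℝ) (a b c d : ι) (x : ι → ℝ) : ℝ :=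
  pd (Christoffel g ginv a d b) c x - pd (Christoffel g ginv a c b) d x
    + ∑ e, Christoffel g ginv a c e x * Christoffel g ginv e d b x
    - ∑ e, Christoffel g ginv a d e x * Christoffel g ginv e c b x

/-- Fully covariant Riemann tensor `R_{abcd}`. -/
def RiemannLow (g ginv : (ι → ℝ) → Matrix ι ι ℝ) (a b c d : ι) (x : ι → ℝ) : ℝ :=
  ∑ e, g x a e * RiemannUp g ginv e b c d x

/-- Ricci tensor `R_{bd}`. -/
def RicciT (g ginv : (ι → ℝ) → Matrix ι ι ℝ) (b d : ι) (x : ι → ℝ) : ℝ :=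
  ∑ a, RiemannUp g ginv a b a d x

/-- Scalar curvature. -/
def ScalarCurv (g ginv : (ι → ℝ) → Matrix ι ι ℝ) (x : ι → ℝ) : ℝ :=
  ∑ b, ∑ d, ginv x b d * RicciT g ginv b d x

/-- Lie derivative of the metric `g` along the vector field `X`, in coordinates:
`(𝓛_X g)_{ab} = X^c ∂_c g_{ab} + g_{cb} ∂_a X^c + g_{ac} ∂_b X^c`. -/
def lieD (g : (ι → ℝ) → Matrix ι ι ℝ) (X : (ι → ℝ) → ι → ℝ) (x : ι → ℝ) :
    Matrix ι ι ℝ :=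
  Matrix.of fun a b =>
    (∑ c, X x c * pd (fun y => g y a b) c x)
      + (∑ c, g x c b * pd (fun y => X y c) a x)
      + (∑ c, g x a c * pd (fun y => X y c) b x)

/-- Covariant Hessian `f_{;ab} = ∂_a ∂_b f − Γ^c_{ab} ∂_c f`. -/
def covHess (g ginv : (ι → ℝ) → Matrix ι ι ℝ) (f : (ι → ℝ) → ℝ) (a b : ι)
    (x : ι → ℝ) : ℝ :=
  pd (pd f b) a x - ∑ c, Christoffel g ginv c a b x * pd f c x

end

section helpers

lemma pd_comp (f : ℝ → ℝ) {d : ℝ} (i : Fin 4) (x : Fin 4 → ℝ)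
    (hf : HasDerivAt f d (x i)) (c : Fin 4) :
    pd (fun y => f (y i)) c x = if c = i then d else 0 := by
  have hproj : HasFDerivAt (fun y : Fin 4 → ℝ => y i)
      (ContinuousLinearMap.proj i : (Fin 4 → ℝ) →L[ℝ] ℝ) x :=
    (ContinuousLinearMap.proj i : (Fin 4 → ℝ) →L[ℝ] ℝ).hasFDerivAt
  have h : HasFDerivAt (fun y : Fin 4 → ℝ => f (y i))
      (d • (ContinuousLinearMap.proj i : (Fin 4 → ℝ) →L[ℝ] ℝ)) x :=
    hf.comp_hasFDerivAt x hproj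
  rw [pd, h.fderiv]
  simp [Pi.single_apply, eq_comm]

lemma pd_rpow (r : ℝ) (x : Fin 4 → ℝ) (hx : 0 < x 0) (c : Fin 4) :
    pd (fun y : Fin 4 → ℝ => (y 0) ^ r) c x
      = if c = 0 then r * x 0 ^ (r - 1) else 0 :=
  pd_comp (fun t => t ^ r) 0 x
    (Real.hasDerivAt_rpow_const (Or.inl hx.ne')) c

lemma pd_sq (x : Fin 4 → ℝ) (c : Fin 4) :
    pd (fun y : Fin 4 → ℝ => (y 0) ^ 2) c x = if c = 0 then 2 * x 0 else 0 := by
  have := pd_comp (fun t : ℝ => t ^ 2) 0 x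
    (by simpa using hasDerivAt_pow 2 (x 0)) c
  simpa using this

lemma pd_mul_coord (k : ℝ) (i : Fin 4) (x : Fin 4 → ℝ) (c : Fin 4) :
    pd (fun y : Fin 4 → ℝ => k * y i) c x = if c = i then k else 0 := by
  have := pd_comp (fun t : ℝ => k * t) i x
    (by simpa using (hasDerivAt_id (x i)).const_mul k) c
  simpa using this

lemma pd_coord (i : Fin 4) (x : Fin 4 → ℝ) (c : Fin 4) :
    pd (fun y : Fin 4 → ℝ => y i) c x = if c = i then 1 else 0 :=
  pd_comp (fun t : ℝ => t) i x (hasDerivAt_id (x i)) c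

lemma pd_const (k : ℝ) (x : Fin 4 → ℝ) (c : Fin 4) :
    pd (fun _ : Fin 4 → ℝ => k) c x = 0 := by
  rw [pd, fderiv_fun_const]; simp

end helpers

/-- On `t > 0` with the Kasner-type metric
`ds² = −dt² + t^{2p} dx² + t^{2q} dy² + t² dz²` (`p ≠ 1`), the vector field
`X = (1/(1−p)) t ∂_t + x ∂_x + ((q−1)/(p−1)) y ∂_y` is a homothetic vector field
with conformal factor `1/(1−p)`. -/
theorem kasner_type_homothety (p q : ℝ) (hp : p ≠ 1)
    (g : (Fin 4 → ℝ) → Matrix (Fin 4) (Fin 4) ℝ)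
    (hg : g = fun x => Matrix.diagonal
      ![-1, (x 0) ^ (2 * p : ℝ), (x 0) ^ (2 * q : ℝ), (x 0) ^ 2])
    (X : (Fin 4 → ℝ) → Fin 4 → ℝ)
    (hX : X = fun x => ![(1 / (1 - p)) * x 0, x 1, ((q - 1) / (p - 1)) * x 2, 0]) :
    ∀ x : Fin 4 → ℝ, 0 < x 0 → lieD g X x = (2 * (1 / (1 - p))) • g x := by
  subst hg hX
  intro x hx
  have h1p : (1 : ℝ) - p ≠ 0 := sub_ne_zero.mpr (Ne.symm hp)
  have hp1 : p - 1 ≠ 0 := sub_ne_zero.mpr hp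
  have hx0 : x 0 ≠ 0 := hx.ne'
  have hrp : ∀ r : ℝ, x 0 * x 0 ^ (r - 1) = x 0 ^ r := by
    intro r
    rw [Real.rpow_sub hx, Real.rpow_one]
    field_simp
  ext a b
  fin_cases a <;> fin_cases b <;>
    simp [lieD, Fin.sum_univ_four, Matrix.diagonal_apply, Matrix.smul_apply,
      pd_rpow _ _ hx, pd_sq, pd_mul_coord, pd_coord, pd_const] <;>
    field_simp
  · ring
  · linear_combination (2 * p) * hrp (p * 2)
  · linear_combination (2 * q * (p - 1)) * hrp (2 * q)
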